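/- Let X be a topological space and Y ⊆ X a B₁*-embedded subset of X. Then Y is B₁-embedded in X if and only if for every Baire one function f : X → ℝ whose zero set Z(f) is disjoint from Y, the sets Y and Z(f) are completely separated in X by B₁(X). In particular, a zero set Z(h) of a Baire one function h : X → ℝ is B₁*-embedded in X if and only if it is B₁-embedded in X. -/

import Mathlib

open Filter Topology

/-- A function between topological spaces is *Baire one* if it is the pointwise
limit of a sequence of continuous functions. -/
def IsBaireOne {X Y : Type*} [TopologicalSpace X] [TopologicalSpace Y] (f : X → Y) : Prop :=
  ∃ F : ℕ → X → Y, (∀ n, Continuous (F n)) ∧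
    ∀ x, Filter.Tendsto (fun n => F n x) Filter.atTop (nhds (f x))

/-- Two subsets `A`, `B` of `S` are *completely separated by `B₁(S)`* if there is a
Baire one function `h : S → ℝ` with `0 ≤ h ≤ 1`, `h = 0` on `A` and `h = 1` on `B`. -/
def CompletelySeparatedB1 {S : Type*} [TopologicalSpace S] (A B : Set S) : Prop :=
  ∃ h : S → ℝ, IsBaireOne h ∧ (∀ x, 0 ≤ h x ∧ h x ≤ 1) ∧
    (∀ x ∈ A, h x = 0) ∧ (∀ x ∈ B, h x = 1)

/-- `Y` is *B₁-embedded* in `X` if every Baire one function on the subspace `Y`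
extends to a Baire one function on `X`. -/
def B1Embedded {X : Type*} [TopologicalSpace X] (Y : Set X) : Prop :=
  ∀ f : Y → ℝ, IsBaireOne f → ∃ g : X → ℝ, IsBaireOne g ∧ ∀ y : Y, g y = f y

/-- `Y` is *B₁*-embedded* in `X` if every bounded Baire one function on the subspace `Y`
extends to a bounded Baire one function on `X`. -/
def B1StarEmbedded {X : Type*} [TopologicalSpace X] (Y : Set X) : Prop :=
  ∀ f : Y → ℝ, IsBaireOne f → (∃ M : ℝ, ∀ y : Y, |f y| ≤ M) →
    ∃ g : X → ℝ, IsBaireOne g ∧ (∃ M : ℝ, ∀ x : X, |g x| ≤ M) ∧ ∀ y : Y, g y = f y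

section Aux

variable {X : Type*} [TopologicalSpace X]

lemma IsBaireOne.compLeft {f : X → ℝ} (hf : IsBaireOne f) {C : ℝ → ℝ}
    (hC : Continuous C) : IsBaireOne (fun x => C (f x)) := by
  obtain ⟨F, hFc, hFt⟩ := hf
  exact ⟨fun n x => C (F n x), fun n => hC.comp (hFc n),
    fun x => (hC.tendsto (f x)).comp (hFt x)⟩

lemma IsBaireOne.comp2 {f g : X → ℝ} (hf : IsBaireOne f) (hg : IsBaireOne g)
    {C : ℝ → ℝ → ℝ} (hC : Continuous fun p : ℝ × ℝ => C p.1 p.2) :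
    IsBaireOne (fun x => C (f x) (g x)) := by
  obtain ⟨F, hFc, hFt⟩ := hf
  obtain ⟨G, hGc, hGt⟩ := hg
  refine ⟨fun n x => C (F n x) (G n x),
    fun n => hC.comp ((hFc n).prodMk (hGc n)), fun x => ?_⟩
  exact (hC.tendsto (f x, g x)).comp ((hFt x).prodMk_nhds (hGt x))

lemma IsBaireOne.mul' {f g : X → ℝ} (hf : IsBaireOne f) (hg : IsBaireOne g) :
    IsBaireOne (fun x => f x * g x) :=
  hf.comp2 hg (C := fun a b => a * b) (by fun_prop)

lemma IsBaireOne.inv₀ {u : X → ℝ} (hu : IsBaireOne u) (h0 : ∀ x, u x ≠ 0) :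
    IsBaireOne fun x => (u x)⁻¹ := by
  obtain ⟨F, hFc, hFt⟩ := hu
  refine ⟨fun n x => F n x / ((F n x) ^ 2 + (1 / ((n : ℝ) + 1))),
    fun n => (hFc n).div (((hFc n).pow 2).add continuous_const)
      (fun x => (add_pos_of_nonneg_of_pos (sq_nonneg _) (by positivity)).ne'), fun x => ?_⟩
  have hd : Filter.Tendsto (fun n : ℕ => (F n x) ^ 2 + (1 / ((n : ℝ) + 1)))
      Filter.atTop (nhds ((u x) ^ 2 + 0)) :=
    ((hFt x).pow 2).add tendsto_one_div_add_atTop_nhds_zero_nat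
  have h2 : (u x) ^ 2 + 0 ≠ 0 := by simpa using pow_ne_zero 2 (h0 x)
  have := (hFt x).div hd h2
  rwa [add_zero, sq, ← div_div, div_self (h0 x), one_div] at this

lemma IsBaireOne.restrict {f : X → ℝ} (hf : IsBaireOne f) (Y : Set X) :
    IsBaireOne fun y : Y => f y := by
  obtain ⟨F, hFc, hFt⟩ := hf
  exact ⟨fun n y => F n y, fun n => (hFc n).comp continuous_subtype_val,
    fun y => hFt y⟩

/-- B₁-embedded implies B₁*-embedded (truncate the extension). -/
lemma B1Embedded.star {Y : Set X} (h : B1Embedded Y) : B1StarEmbedded Y := by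
  intro f hf hM
  obtain ⟨M, hM⟩ := hM
  obtain ⟨g, hg, hge⟩ := h f hf
  set M' : ℝ := max M 0 with hM'
  have hM'0 : 0 ≤ M' := le_max_right _ _
  refine ⟨fun x => max (-M') (min (g x) M'),
    hg.compLeft (continuous_const.max (continuous_id.min continuous_const)),
    ⟨M', fun x => ?_⟩, fun y => ?_⟩
  · rw [abs_le]
    exact ⟨le_max_left _ _, max_le (by linarith) (min_le_right _ _)⟩
  · have h1 : |f y| ≤ M' := (hM y).trans (le_max_left _ _)
    rw [abs_le] at h1
    show max (-M') (min (g y) M') = f y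
    rw [hge y, min_eq_left h1.2, max_eq_right (by linarith [h1.1])]

/-- Forward direction of part 1. -/
lemma b1Embedded_to_sep {Y : Set X} (hB : B1Embedded Y) :
    ∀ f : X → ℝ, IsBaireOne f → {x : X | f x = 0} ∩ Y = ∅ →
      CompletelySeparatedB1 Y {x : X | f x = 0} := by
  intro f hf hd
  have hne : ∀ y : Y, f y ≠ 0 := by
    intro y hy
    have : (y : X) ∈ {x : X | f x = 0} ∩ Y := ⟨hy, y.2⟩
    rw [hd] at this
    exact this
  obtain ⟨G, hG, hGe⟩ := hB (fun y : Y => (f y)⁻¹) ((hf.restrict Y).inv₀ hne)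
  have hp : IsBaireOne (fun x => f x * G x) := hf.mul' hG
  refine ⟨fun x => 1 - min 1 (max 0 (f x * G x)),
    hp.compLeft (continuous_const.sub
      (continuous_const.min (continuous_const.max continuous_id))),
    fun x => ?_, fun x hx => ?_, fun x hx => ?_⟩
  · have h1 : min 1 (max 0 (f x * G x)) ≤ 1 := min_le_left _ _
    have h2 : (0 : ℝ) ≤ min 1 (max 0 (f x * G x)) :=
      le_min one_pos.le (le_max_left _ _)
    constructor <;> · show _ ≤ _; dsimp only; linarith
  · show 1 - min 1 (max 0 (f x * G x)) = 0
    have := hGe ⟨x, hx⟩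
    simp only at this
    rw [this, mul_inv_cancel₀ (hne ⟨x, hx⟩)]
    norm_num
  · have hx0 : f x = 0 := hx
    show 1 - min 1 (max 0 (f x * G x)) = 1
    rw [hx0]
    norm_num

/-- Backward direction of part 1. -/
lemma sep_to_b1Embedded {Y : Set X} (hY : B1StarEmbedded Y)
    (hsep : ∀ f : X → ℝ, IsBaireOne f → {x : X | f x = 0} ∩ Y = ∅ →
      CompletelySeparatedB1 Y {x : X | f x = 0}) : B1Embedded Y := by
  intro f hf
  set φ : ℝ → ℝ := fun t => t / (1 + |t|) with hφdef
  have hφc : Continuous φ :=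
    continuous_id.div (continuous_const.add continuous_abs) (fun t => by positivity)
  have hφlt : ∀ t, |φ t| < 1 := by
    intro t
    have h0 : (0 : ℝ) < 1 + |t| := by positivity
    rw [hφdef]
    simp only
    rw [abs_div, abs_of_pos h0, div_lt_one h0]
    linarith [abs_nonneg t]
  -- bounded Baire one function on Y
  obtain ⟨g, hg, -, hge⟩ := hY (fun y => φ (f y)) (hf.compLeft hφc)
    ⟨1, fun y => (hφlt (f y)).le⟩
  -- the Baire one function whose zero set is {|g| ≥ 1}
  set F : X → ℝ := fun x => max (1 - |g x|) 0 with hFdef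
  have hF : IsBaireOne F :=
    hg.compLeft ((continuous_const.sub continuous_abs).max continuous_const)
  have hFd : {x : X | F x = 0} ∩ Y = ∅ := by
    rw [Set.eq_empty_iff_forall_notMem]
    rintro x ⟨hx1, hx2⟩
    have h1 : 1 - |g x| ≤ 0 := by
      by_contra hc
      push_neg at hc
      have : F x = 1 - |g x| := max_eq_left hc.le
      rw [hx1] at this
      linarith
    have h2 : |g x| < 1 := by
      have := hge ⟨x, hx2⟩
      simp only at this
      rw [this]
      exact hφlt _
    linarith
  obtain ⟨k, hk, hk01, hkY, hkZ⟩ := hsep F hF hFd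
  set g' : X → ℝ := fun x => g x * (1 - k x) with hg'def
  have hg' : IsBaireOne g' := hg.comp2 hk (C := fun a b => a * (1 - b)) (by fun_prop)
  have hlt : ∀ x, |g' x| < 1 := by
    intro x
    by_cases hx : F x = 0
    · have : k x = 1 := hkZ x hx
      simp [hg'def, this]
    · have h1 : 0 < 1 - |g x| := by
        by_contra hc
        push_neg at hc
        exact hx (max_eq_right hc)
      have h2 : |1 - k x| ≤ 1 := by
        have := hk01 x
        rw [abs_le]; constructor <;> linarith [this.1, this.2]
      calc |g' x| = |g x| * |1 - k x| := abs_mul _ _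
        _ ≤ |g x| * 1 := by
            exact mul_le_mul_of_nonneg_left h2 (abs_nonneg _)
        _ < 1 := by linarith
  have hdpos : ∀ x, (0 : ℝ) < 1 - |g' x| := fun x => by linarith [hlt x, abs_nonneg (g' x)]
  have hd : IsBaireOne (fun x => (1 - |g' x|)⁻¹) :=
    (hg'.compLeft (continuous_const.sub continuous_abs)).inv₀
      (fun x => (hdpos x).ne')
  refine ⟨fun x => g' x * (1 - |g' x|)⁻¹, hg'.mul' hd, fun y => ?_⟩
  have hky : k y = 0 := hkY y y.2
  have hgy : g y = φ (f y) := by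
    have := hge y; simpa using this
  simp only [hg'def, hky, sub_zero, mul_one, hgy]
  -- show φ t * (1 - |φ t|)⁻¹ = t
  set t := f y
  have h0 : (0 : ℝ) < 1 + |t| := by positivity
  have habs : |φ t| = |t| / (1 + |t|) := by
    rw [hφdef]; simp only; rw [abs_div, abs_of_pos h0]
  have h2 : 1 - |φ t| = 1 / (1 + |t|) := by
    rw [habs]; field_simp; ring
  rw [h2, hφdef]
  simp only
  rw [one_div, inv_inv, div_mul_cancel₀ _ h0.ne']

/-- Zero sets of Baire one functions satisfy the separation condition w.r.t.
any Baire one function with disjoint zero set. -/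
lemma sep_of_zeroSet {h : X → ℝ} (hh : IsBaireOne h) :
    ∀ f : X → ℝ, IsBaireOne f → {x : X | f x = 0} ∩ {x : X | h x = 0} = ∅ →
      CompletelySeparatedB1 {x : X | h x = 0} {x : X | f x = 0} := by
  intro f hf hd
  have hpos : ∀ x, 0 < h x ^ 2 + f x ^ 2 := by
    intro x
    have : h x ≠ 0 ∨ f x ≠ 0 := by
      by_contra hc
      push_neg at hc
      have : x ∈ {x : X | f x = 0} ∩ {x : X | h x = 0} := ⟨hc.2, hc.1⟩
      rw [hd] at this
      exact this
    rcases this with h1 | h1 <;> positivity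
  have hv : IsBaireOne (fun x => h x ^ 2 + f x ^ 2) := hh.comp2 hf (C := fun a b => a ^ 2 + b ^ 2) (by fun_prop)
  have hvinv : IsBaireOne (fun x => (h x ^ 2 + f x ^ 2)⁻¹) :=
    hv.inv₀ (fun x => (hpos x).ne')
  have hu : IsBaireOne (fun x => h x ^ 2) := hh.compLeft (C := fun t => t ^ 2) (by fun_prop)
  refine ⟨fun x => h x ^ 2 * (h x ^ 2 + f x ^ 2)⁻¹, hu.mul' hvinv,
    fun x => ?_, fun x hx => ?_, fun x hx => ?_⟩
  · constructor
    · positivity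
    · show h x ^ 2 * (h x ^ 2 + f x ^ 2)⁻¹ ≤ 1
      rw [← div_eq_mul_inv, div_le_one (hpos x)]
      nlinarith [sq_nonneg (f x)]
  · have hx0 : h x = 0 := hx
    simp [hx0]
  · have hx0 : f x = 0 := hx
    have hne : h x ≠ 0 := by
      intro hc
      have : x ∈ {x : X | f x = 0} ∩ {x : X | h x = 0} := ⟨hx0, hc⟩
      rw [hd] at this
      exact this
    show h x ^ 2 * (h x ^ 2 + f x ^ 2)⁻¹ = 1
    rw [hx0]
    simp only [ne_eq, OfNat.ofNat_ne_zero, not_false_eq_true, zero_pow, add_zero]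
    exact mul_inv_cancel₀ (pow_ne_zero 2 hne)

end Aux

theorem b1StarEmbedded_b1Embedded_iff {X : Type*} [TopologicalSpace X]
    (Y : Set X) (hY : B1StarEmbedded Y) :
    (B1Embedded Y ↔
      ∀ f : X → ℝ, IsBaireOne f → {x : X | f x = 0} ∩ Y = ∅ →
        CompletelySeparatedB1 Y {x : X | f x = 0}) ∧
    (∀ h : X → ℝ, IsBaireOne h →
      (B1StarEmbedded {x : X | h x = 0} ↔ B1Embedded {x : X | h x = 0})) := by
  constructor
  · exact ⟨fun hB => b1Embedded_to_sep hB, fun hsep => sep_to_b1Embedded hY hsep⟩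
  · intro h hh
    exact ⟨fun hstar => sep_to_b1Embedded hstar (sep_of_zeroSet hh),
      fun hB => hB.star⟩
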